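/- arXiv:2410.19674 — 2 statements merged into one kernel-verified Lean document; each statement's English description precedes it below -/
import Mathlib

section
/- For integers n > 1, m > 1, and any r-regular bipartite graph G of order m with r ≥ 1, the lexicographic product G[\overline{K_n}] satisfies χ_ld(G[\overline{K_n}]) = 2. -/
open Finset

/-- reversal within each half -/
def rhoP (h p : ℕ) : ℕ := if p < h then h - 1 - p else 2*h + h - 1 - p

/-- third special permutation for odd row count -/
def piP (h p : ℕ) : ℕ := if p < h then 2*(h - 1 - p) else 4*h - 1 - 2*p

/-- cyclic shift by h -/
def shP (h p : ℕ) : ℕ := if p < h then p + h else p - h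

/-- the row permutations -/
def gfun (h n j p : ℕ) : ℕ :=
  if n % 2 = 0 then
    (if j + 2 < n then (if j % 2 = 0 then p else 2*h - 1 - p)
     else if j + 2 = n then p else rhoP h p)
  else
    (if j + 3 < n then (if j % 2 = 0 then p else 2*h - 1 - p)
     else if j + 3 = n then p
     else if j + 2 = n then shP h p
     else piP h p)

lemma gfun_lt (h n j p : ℕ) (hh : 1 ≤ h) (hp : p < 2*h) : gfun h n j p < 2*h := by
  unfold gfun rhoP piP shP
  split_ifs <;> omega

lemma gfun_inj (h n j : ℕ) {p q : ℕ} (hh : 1 ≤ h) (hp : p < 2*h) (hq : q < 2*h)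
    (he : gfun h n j p = gfun h n j q) : p = q := by
  unfold gfun rhoP piP shP at he
  split_ifs at he <;> omega

lemma sum_alt (a b k : ℕ) :
    ∑ j ∈ Finset.range (2*k), (if j % 2 = 0 then a else b) = k * (a + b) := by
  induction k with
  | zero => simp
  | succ k ih =>
    have h2 : 2*(k+1) = (2*k) + 1 + 1 := by ring
    rw [h2, Finset.sum_range_succ, Finset.sum_range_succ, ih]
    have h3 : (2*k) % 2 = 0 := by omega
    rw [if_pos h3, if_neg (by omega)]
    ring

lemma gfun_sum (h n p : ℕ) (hh : 1 ≤ h) (hn : 2 ≤ n) (hp : p < 2*h) :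
    ∑ j ∈ Finset.range n, gfun h n j p
      = (if n % 2 = 0 then (n-2)/2 else (n-3)/2) * (2*h - 1)
        + (if p < h then (if n % 2 = 0 then h - 1 else 3*h - 2) else 3*h - 1) := by
  rcases Nat.even_or_odd n with he | ho
  · have hmod : n % 2 = 0 := Nat.even_iff.mp he
    obtain ⟨k, hk⟩ : ∃ k, n = 2*k + 2 := ⟨(n-2)/2, by omega⟩
    subst hk
    rw [Finset.sum_range_succ, Finset.sum_range_succ]
    have h1 : ∀ j ∈ Finset.range (2*k), gfun h (2*k+2) j p
        = (if j % 2 = 0 then p else 2*h - 1 - p) := by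
      intro j hj
      simp only [Finset.mem_range] at hj
      unfold gfun
      rw [if_pos hmod, if_pos (by omega)]
    rw [Finset.sum_congr rfl h1, sum_alt]
    have h2 : gfun h (2*k+2) (2*k) p = p := by
      unfold gfun; rw [if_pos hmod, if_neg (by omega), if_pos (by omega)]
    have h3 : gfun h (2*k+2) (2*k+1) p = rhoP h p := by
      unfold gfun; rw [if_pos hmod, if_neg (by omega), if_neg (by omega)]
    rw [h2, h3]
    unfold rhoP
    rw [if_pos hmod]
    have hk2 : (2*k+2-2)/2 = k := by omega
    have hs : p + (2*h - 1 - p) = 2*h - 1 := by omega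
    rw [hk2, hs]
    split_ifs <;> omega
  · have hmod : ¬ (n % 2 = 0) := by simpa [Nat.odd_iff] using ho
    obtain ⟨k, hk⟩ : ∃ k, n = 2*k + 3 := ⟨(n-3)/2, by omega⟩
    subst hk
    rw [Finset.sum_range_succ, Finset.sum_range_succ, Finset.sum_range_succ]
    have h1 : ∀ j ∈ Finset.range (2*k), gfun h (2*k+3) j p
        = (if j % 2 = 0 then p else 2*h - 1 - p) := by
      intro j hj
      simp only [Finset.mem_range] at hj
      unfold gfun
      rw [if_neg hmod, if_pos (by omega)]
    rw [Finset.sum_congr rfl h1, sum_alt]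
    have h2 : gfun h (2*k+3) (2*k) p = p := by
      unfold gfun; rw [if_neg hmod, if_neg (by omega), if_pos (by omega)]
    have h3 : gfun h (2*k+3) (2*k+1) p = shP h p := by
      unfold gfun
      rw [if_neg hmod, if_neg (by omega), if_neg (by omega), if_pos (by omega)]
    have h4 : gfun h (2*k+3) (2*k+2) p = piP h p := by
      unfold gfun
      rw [if_neg hmod, if_neg (by omega), if_neg (by omega), if_neg (by omega)]
    rw [h2, h3, h4]
    unfold shP piP
    rw [if_neg hmod]
    have hk2 : (2*k+3-3)/2 = k := by omega
    have hs : p + (2*h - 1 - p) = 2*h - 1 := by omega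
    rw [hk2, hs]
    split_ifs <;> omega

lemma add_mul_inj {m j1 j2 g1 g2 : ℕ} (h1 : g1 < m) (h2 : g2 < m)
    (he : j1*m + g1 = j2*m + g2) : j1 = j2 ∧ g1 = g2 := by
  have hj : j1 = j2 := by
    rcases lt_trichotomy j1 j2 with hlt | heq | hgt
    · have : (j1+1)*m ≤ j2*m := Nat.mul_le_mul_right m hlt
      nlinarith
    · exact heq
    · have : (j2+1)*m ≤ j1*m := Nat.mul_le_mul_right m hgt
      nlinarith
  exact ⟨hj, by subst hj; omega⟩



open Classical in
/-- The weight of a vertex: sum of labels of its neighbors. -/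
noncomputable def ldWeight {V : Type*} (G : SimpleGraph V) [Fintype V] (f : V → ℕ) (v : V) : ℕ :=
  ∑ x ∈ Finset.univ, if G.Adj v x then f x else 0

/-- `f` is a local distance antimagic labeling of `G`: a bijection onto `{1,…,|V|}`
with adjacent vertices getting distinct weights. -/
def IsLDAL {V : Type*} (G : SimpleGraph V) [Fintype V] (f : V → ℕ) : Prop :=
  Set.BijOn f Set.univ (Set.Icc 1 (Fintype.card V)) ∧
    ∀ ⦃u v : V⦄, G.Adj u v → ldWeight G f u ≠ ldWeight G f v

/-- The local distance antimagic chromatic number: minimum number of distinct weights. -/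
noncomputable def chiLD {V : Type*} (G : SimpleGraph V) [Fintype V] : ℕ :=
  sInf {k | ∃ f : V → ℕ, IsLDAL G f ∧ (Finset.univ.image (ldWeight G f)).card = k}

/-- The join `G + H` of two graphs. -/
def graphJoin {α β : Type*} (G : SimpleGraph α) (H : SimpleGraph β) :
    SimpleGraph (α ⊕ β) where
  Adj x y :=
    match x, y with
    | Sum.inl a, Sum.inl b => G.Adj a b
    | Sum.inr a, Sum.inr b => H.Adj a b
    | Sum.inl _, Sum.inr _ => True
    | Sum.inr _, Sum.inl _ => True
  symm := by
    constructor
    rintro (a | a) (b | b) h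
    exacts [G.adj_symm h, trivial, trivial, H.adj_symm h]
  loopless := by
    constructor
    rintro (a | a) h
    exacts [G.loopless.irrefl a h, H.loopless.irrefl a h]

/-- The lexicographic product `G[H]`. -/
def lexProd {α β : Type*} (G : SimpleGraph α) (H : SimpleGraph β) :
    SimpleGraph (α × β) where
  Adj x y := G.Adj x.1 y.1 ∨ (x.1 = y.1 ∧ H.Adj x.2 y.2)
  symm := by
    constructor
    rintro x y (h | ⟨e, h⟩)
    exacts [Or.inl h.symm, Or.inr ⟨e.symm, h.symm⟩]
  loopless := by
    constructor
    rintro x (h | ⟨e, h⟩)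
    exacts [G.loopless.irrefl _ h, H.loopless.irrefl _ h]

/-- The friendship graph `F_n`: `n` triangles sharing the central vertex `none`. -/
def friendship (n : ℕ) : SimpleGraph (Option (Fin n × Fin 2)) where
  Adj x y := x ≠ y ∧ (x = none ∨ y = none ∨ ∃ i a b, x = some (i, a) ∧ y = some (i, b))
  symm := by
    constructor
    rintro x y ⟨hne, h⟩
    refine ⟨hne.symm, ?_⟩
    rcases h with h | h | ⟨i, a, b, hx, hy⟩
    · exact Or.inr (Or.inl h)
    · exact Or.inl h
    · exact Or.inr (Or.inr ⟨i, b, a, hy, hx⟩)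
  loopless := ⟨fun x h => h.1 rfl⟩

/-- The bistar `B_{n,n}`: two adjacent centers, each with `n` leaves. -/
def bistar (n : ℕ) : SimpleGraph (Bool ⊕ Bool × Fin n) where
  Adj x y :=
    match x, y with
    | Sum.inl a, Sum.inl b => a ≠ b
    | Sum.inl a, Sum.inr (c, _) => a = c
    | Sum.inr (c, _), Sum.inl a => a = c
    | Sum.inr _, Sum.inr _ => False
  symm := by
    constructor
    rintro (a | ⟨c, i⟩) (b | ⟨d, j⟩) h
    exacts [h.symm, h, h, h.elim]
  loopless := by
    constructor
    rintro (a | ⟨c, i⟩) h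
    exacts [h rfl, h]

theorem stmt_12 {V : Type*} [Fintype V] (G : SimpleGraph V) [DecidableRel G.Adj]
    (n m r : ℕ) (hn : 1 < n) (hm : 1 < m) (hr : 1 ≤ r)
    (hcard : Fintype.card V = m)
    (hreg : G.IsRegularOfDegree r)
    (hbip : ∃ s : Set V, ∀ ⦃u v⦄, G.Adj u v → (u ∈ s ↔ v ∉ s)) :
    chiLD (lexProd G (⊥ : SimpleGraph (Fin n))) = 2 := by
  classical
  obtain ⟨s, hs⟩ := hbip
  have hV : Nonempty V := by
    rw [← Fintype.card_pos_iff]; omega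
  obtain ⟨v0⟩ := hV
  have hnbr : ∀ v : V, ∃ u, G.Adj v u := by
    intro v
    have h1 : (G.neighborFinset v).card = r := hreg v
    have h2 : (G.neighborFinset v).Nonempty := by
      rw [← Finset.card_pos, h1]; omega
    obtain ⟨u, hu⟩ := h2
    exact ⟨u, (SimpleGraph.mem_neighborFinset _ _ _).mp hu⟩
  set A : Finset V := Finset.univ.filter (fun v => v ∈ s) with hA
  set B : Finset V := Finset.univ.filter (fun v => v ∉ s) with hB
  have hmemA : ∀ v : V, v ∈ A ↔ v ∈ s := by intro v; simp [hA]
  have hmemB : ∀ v : V, v ∈ B ↔ v ∉ s := by intro v; simp [hB]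
  have hdegfilter : ∀ v : V, (Finset.univ.filter (fun u => G.Adj v u)).card = r := by
    intro v
    rw [← hreg v]
    congr 1
    ext u; simp [SimpleGraph.mem_neighborFinset]
  have hABcard : A.card = B.card := by
    have key : r * A.card = r * B.card := by
      calc r * A.card = ∑ _v ∈ A, r := by rw [Finset.sum_const, smul_eq_mul, mul_comm]
        _ = ∑ v ∈ A, ∑ u ∈ Finset.univ, (if G.Adj v u then 1 else 0) := by
            refine Finset.sum_congr rfl fun v _ => ?_
            rw [← Finset.card_filter, hdegfilter v]
        _ = ∑ u ∈ Finset.univ, ∑ v ∈ A, (if G.Adj v u then 1 else 0) := Finset.sum_comm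
        _ = ∑ u ∈ Finset.univ, (if u ∉ s then r else 0) := by
            refine Finset.sum_congr rfl fun u _ => ?_
            by_cases hu : u ∈ s
            · rw [if_neg (by simpa using hu)]
              apply Finset.sum_eq_zero
              intro v hv
              rw [if_neg]
              intro hadj
              exact ((hs hadj).mp ((hmemA v).mp hv)) hu
            · rw [if_pos hu, ← hdegfilter u, ← Finset.card_filter]
              congr 1
              ext v
              simp only [Finset.mem_filter, hmemA v, Finset.mem_univ, true_and]
              constructor
              · rintro ⟨_, hadj⟩; exact hadj.symm
              · intro hadj
                refine ⟨?_, hadj.symm⟩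
                by_contra hv
                exact hu ((hs hadj).mpr hv)
        _ = ∑ _u ∈ B, r := by
            rw [Finset.sum_filter]
        _ = r * B.card := by rw [Finset.sum_const, smul_eq_mul, mul_comm]
    exact Nat.eq_of_mul_eq_mul_left (by omega) key
  have hABsum : A.card + B.card = m := by
    rw [hA, hB, Finset.card_filter_add_card_filter_not, Finset.card_univ, hcard]
  set h := A.card with hh
  have hm2 : m = 2*h := by omega
  have hh1 : 1 ≤ h := by omega
  -- index
  let eA : {x // x ∈ A} ≃ Fin A.card := A.equivFin
  let eB : {x // x ∈ B} ≃ Fin B.card := B.equivFin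
  let iA : V → ℕ := fun v => if hv : v ∈ A then (eA ⟨v, hv⟩ : ℕ) else 0
  let iB : V → ℕ := fun v => if hv : v ∈ B then (eB ⟨v, hv⟩ : ℕ) else 0
  let idx : V → ℕ := fun v => if v ∈ s then iA v else h + iB v
  have hidx_low : ∀ v, v ∈ s → idx v < h := by
    intro v hv
    have hvA : v ∈ A := (hmemA v).mpr hv
    simp only [idx, iA, if_pos hv, dif_pos hvA]
    exact (eA ⟨v, hvA⟩).isLt
  have hidx_high : ∀ v, v ∉ s → h ≤ idx v ∧ idx v < 2*h := by
    intro v hv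
    have hvB : v ∈ B := (hmemB v).mpr hv
    simp only [idx, iB, if_neg hv, dif_pos hvB]
    have := (eB ⟨v, hvB⟩).isLt
    omega
  have hidx_lt : ∀ v, idx v < 2*h := by
    intro v
    by_cases hv : v ∈ s
    · have := hidx_low v hv; omega
    · exact (hidx_high v hv).2
  have hidx_inj : Function.Injective idx := by
    intro u v He
    by_cases hu : u ∈ s <;> by_cases hv : v ∈ s
    · have huA : u ∈ A := (hmemA u).mpr hu
      have hvA : v ∈ A := (hmemA v).mpr hv
      simp only [idx, iA, if_pos hu, if_pos hv, dif_pos huA, dif_pos hvA] at He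
      exact congrArg Subtype.val (eA.injective (Fin.ext He))
    · have h1 := hidx_low u hu
      have h2 := (hidx_high v hv).1
      omega
    · have h1 := hidx_low v hv
      have h2 := (hidx_high u hu).1
      omega
    · have huB : u ∈ B := (hmemB u).mpr hu
      have hvB : v ∈ B := (hmemB v).mpr hv
      simp only [idx, iB, if_neg hu, if_neg hv, dif_pos huB, dif_pos hvB] at He
      have He2 : (eB ⟨u, huB⟩ : ℕ) = (eB ⟨v, hvB⟩ : ℕ) := by omega
      have := eB.injective (Fin.ext He2)
      exact congrArg Subtype.val this
  -- labeling
  set N := m * n with hN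
  have hcardVn : Fintype.card (V × Fin n) = N := by
    simp [hcard, hN]
  set F : V × Fin n → ℕ := fun x => (x.2 : ℕ) * m + gfun h n (x.2 : ℕ) (idx x.1) + 1 with hF
  have hg_lt : ∀ (j : ℕ) (v : V), gfun h n j (idx v) < m := by
    intro j v
    rw [hm2]
    exact gfun_lt h n j _ hh1 (hidx_lt v)
  have hF_inj : Set.InjOn F Set.univ := by
    rintro ⟨v1, j1⟩ - ⟨v2, j2⟩ - he
    simp only [hF] at he
    obtain ⟨hj, hgg⟩ := add_mul_inj (hg_lt j1 v1) (hg_lt j2 v2) (Nat.succ_injective he)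
    have hjj : j1 = j2 := Fin.ext hj
    subst hjj
    have hii : idx v1 = idx v2 :=
      gfun_inj h n (j1 : ℕ) hh1 (hidx_lt v1) (hidx_lt v2) hgg
    rw [hidx_inj hii]
  have hF_mem : ∀ x : V × Fin n, F x ∈ Set.Icc 1 N := by
    rintro ⟨v, j⟩
    constructor
    · simp [hF]
    · have hj : (j : ℕ) + 1 ≤ n := j.isLt
      have h5 : ((j : ℕ) + 1) * m ≤ n * m := Nat.mul_le_mul_right m hj
      rw [Nat.succ_mul] at h5
      have hg := hg_lt (j : ℕ) v
      have : F (v, j) ≤ (j : ℕ) * m + m := by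
        simp only [hF]; omega
      calc F (v, j) ≤ (j : ℕ) * m + m := this
        _ ≤ n * m := h5
        _ = N := Nat.mul_comm n m
  have hF_bij : Set.BijOn F Set.univ (Set.Icc 1 (Fintype.card (V × Fin n))) := by
    rw [hcardVn]
    have himage : F '' Set.univ = Set.Icc 1 N := by
      apply Set.eq_of_subset_of_ncard_le
      · rintro y ⟨x, -, rfl⟩; exact hF_mem x
      · have h1 : (Set.Icc 1 N).ncard = N := by
          rw [← Finset.coe_Icc, Set.ncard_coe_finset, Nat.card_Icc]; omega
        have h2 : (F '' Set.univ).ncard = N := by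
          rw [Set.ncard_image_of_injOn hF_inj, Set.ncard_univ, Nat.card_eq_fintype_card,
            hcardVn]
        omega
      · exact Set.finite_Icc _ _
    exact himage ▸ hF_inj.bijOn_image
  -- vertex sums
  set Cb := (∑ j ∈ Finset.range n, (j * m + 1))
      + (if n % 2 = 0 then (n-2)/2 else (n-3)/2) * (2*h - 1) with hCb
  set TA := Cb + (if n % 2 = 0 then h - 1 else 3*h - 2) with hTA
  set TB := Cb + (3*h - 1) with hTB
  have hTAB : TA ≠ TB := by
    simp only [hTA, hTB]
    split_ifs <;> omega
  have hS : ∀ v : V, (∑ j : Fin n, F (v, j)) = if v ∈ s then TA else TB := by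
    intro v
    have e1 : (∑ j : Fin n, F (v, j))
        = ∑ j ∈ Finset.range n, (j * m + gfun h n j (idx v) + 1) :=
      Fin.sum_univ_eq_sum_range (fun j => j * m + gfun h n j (idx v) + 1) n
    rw [e1]
    have e2 : ∀ j ∈ Finset.range n, j * m + gfun h n j (idx v) + 1
        = (j * m + 1) + gfun h n j (idx v) := fun j _ => by ring
    rw [Finset.sum_congr rfl e2, Finset.sum_add_distrib,
      gfun_sum h n (idx v) hh1 (by omega) (hidx_lt v)]
    by_cases hv : v ∈ s
    · rw [if_pos (hidx_low v hv), if_pos hv, hTA, hCb]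
      ring
    · rw [if_neg (show ¬ idx v < h by have := (hidx_high v hv).1; omega), if_neg hv, hTB, hCb]
      ring
  -- adjacency in the product
  have hAdj : ∀ (x y : V × Fin n),
      (lexProd G (⊥ : SimpleGraph (Fin n))).Adj x y ↔ G.Adj x.1 y.1 := by
    intro x y
    constructor
    · rintro (hh | ⟨-, hh⟩)
      · exact hh
      · exact hh.elim
    · exact Or.inl
  -- weights
  have hW : ∀ x : V × Fin n,
      ldWeight (lexProd G (⊥ : SimpleGraph (Fin n))) F x
        = if x.1 ∈ s then r * TB else r * TA := by
    rintro ⟨v, i⟩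
    unfold ldWeight
    rw [Fintype.sum_prod_type]
    have e1 : ∀ u : V,
        (∑ j : Fin n, if (lexProd G (⊥ : SimpleGraph (Fin n))).Adj (v, i) (u, j)
          then F (u, j) else 0)
        = if G.Adj v u then (if u ∈ s then TA else TB) else 0 := by
      intro u
      by_cases hadj : G.Adj v u
      · rw [if_pos hadj, ← hS u]
        refine Finset.sum_congr rfl fun j _ => ?_
        rw [if_pos ((hAdj _ _).mpr hadj)]
      · rw [if_neg hadj]
        refine Finset.sum_eq_zero fun j _ => ?_
        rw [if_neg (fun hc => hadj ((hAdj _ _).mp hc))]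
    rw [Finset.sum_congr rfl (fun u _ => e1 u)]
    by_cases hv : v ∈ s
    · rw [if_pos hv]
      have e3 : ∀ u ∈ Finset.univ, (if G.Adj v u then (if u ∈ s then TA else TB) else 0)
          = (if G.Adj v u then TB else 0) := by
        intro u _
        by_cases hadj : G.Adj v u
        · have hu : u ∉ s := by
            have h4 := hs hadj
            tauto
          rw [if_pos hadj, if_pos hadj, if_neg hu]
        · rw [if_neg hadj, if_neg hadj]
      rw [Finset.sum_congr rfl e3, ← Finset.sum_filter, Finset.sum_const, hdegfilter v,
        smul_eq_mul]
    · rw [if_neg hv]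
      have e3 : ∀ u ∈ Finset.univ, (if G.Adj v u then (if u ∈ s then TA else TB) else 0)
          = (if G.Adj v u then TA else 0) := by
        intro u _
        by_cases hadj : G.Adj v u
        · have hu : u ∈ s := by
            have h4 := hs hadj
            tauto
          rw [if_pos hadj, if_pos hadj, if_pos hu]
        · rw [if_neg hadj, if_neg hadj]
      rw [Finset.sum_congr rfl e3, ← Finset.sum_filter, Finset.sum_const, hdegfilter v,
        smul_eq_mul]
  have hrTT : r * TB ≠ r * TA := by
    intro hc
    exact hTAB (Nat.eq_of_mul_eq_mul_left (by omega) hc).symm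
  have hLDAL : IsLDAL (lexProd G (⊥ : SimpleGraph (Fin n))) F := by
    refine ⟨hF_bij, ?_⟩
    intro x y hxy
    have hg : G.Adj x.1 y.1 := (hAdj x y).mp hxy
    rw [hW x, hW y]
    have h4 := hs hg
    by_cases h1 : x.1 ∈ s
    · rw [if_pos h1, if_neg (h4.mp h1)]
      exact hrTT
    · rw [if_neg h1, if_pos (by tauto)]
      exact hrTT.symm
  -- two parts are inhabited
  obtain ⟨u0, hu0⟩ := hnbr v0
  have hop := hs hu0
  obtain ⟨a0, ha0, b0, hb0⟩ : ∃ a, a ∈ s ∧ ∃ b, b ∉ s := by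
    by_cases h0 : v0 ∈ s
    · exact ⟨v0, h0, u0, hop.mp h0⟩
    · exact ⟨u0, by tauto, v0, h0⟩
  have hi0 : (0 : ℕ) < n := by omega
  let i0 : Fin n := ⟨0, hi0⟩
  set W := Finset.univ.image (ldWeight (lexProd G (⊥ : SimpleGraph (Fin n))) F) with hWdef
  have hmemTB : r * TB ∈ W := by
    refine Finset.mem_image.mpr ⟨(a0, i0), Finset.mem_univ _, ?_⟩
    rw [hW (a0, i0)]
    simp [ha0]
  have hmemTA : r * TA ∈ W := by
    refine Finset.mem_image.mpr ⟨(b0, i0), Finset.mem_univ _, ?_⟩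
    rw [hW (b0, i0)]
    simp [hb0]
  have hsub : W ⊆ {r * TB, r * TA} := by
    intro y hy
    obtain ⟨x, -, rfl⟩ := Finset.mem_image.mp hy
    rw [hW x]
    by_cases h1 : x.1 ∈ s
    · rw [if_pos h1]; simp
    · rw [if_neg h1]; simp
  have hcard2 : W.card = 2 := by
    apply le_antisymm
    · calc W.card ≤ ({r * TB, r * TA} : Finset ℕ).card := Finset.card_le_card hsub
        _ ≤ 2 := Finset.card_insert_le _ _ |>.trans (by simp)
    · exact Finset.one_lt_card.mpr ⟨_, hmemTB, _, hmemTA, hrTT⟩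
  have h2mem : 2 ∈ {k | ∃ f : V × Fin n → ℕ,
      IsLDAL (lexProd G (⊥ : SimpleGraph (Fin n))) f ∧
      (Finset.univ.image (ldWeight (lexProd G (⊥ : SimpleGraph (Fin n))) f)).card = k} :=
    ⟨F, hLDAL, hcard2⟩
  have hlb : ∀ k ∈ {k | ∃ f : V × Fin n → ℕ,
      IsLDAL (lexProd G (⊥ : SimpleGraph (Fin n))) f ∧
      (Finset.univ.image (ldWeight (lexProd G (⊥ : SimpleGraph (Fin n))) f)).card = k},
      2 ≤ k := by
    rintro k ⟨f', hf', rfl⟩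
    have hadj0 : (lexProd G (⊥ : SimpleGraph (Fin n))).Adj (v0, i0) (u0, i0) := Or.inl hu0
    have hne := hf'.2 hadj0
    exact Finset.one_lt_card.mpr ⟨_, Finset.mem_image_of_mem _ (Finset.mem_univ (v0, i0)),
      _, Finset.mem_image_of_mem _ (Finset.mem_univ (u0, i0)), hne⟩
  unfold chiLD
  exact le_antisymm (Nat.sInf_le h2mem) (hlb _ (Nat.sInf_mem ⟨2, h2mem⟩))
end

section
/- For positive integers m and n > 1, χ_ld(K_m[\overline{K_n}]) = m, i.e., the complete multipartite graph with m parts each of size n has local distance antimagic chromatic number m. -/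
open Finset

section proof19
variable (m n : ℕ)

private def lab19 (p : Fin m × Fin n) : ℕ := p.1 * n + p.2 + 1

private def psum19 (k : Fin m) : ℕ := ∑ l : Fin n, lab19 m n (k, l)

private lemma adj19 (p q : Fin m × Fin n) :
    (lexProd (⊤ : SimpleGraph (Fin m)) (⊥ : SimpleGraph (Fin n))).Adj p q ↔ p.1 ≠ q.1 := by
  show (⊤ : SimpleGraph (Fin m)).Adj p.1 q.1 ∨
    (p.1 = q.1 ∧ (⊥ : SimpleGraph (Fin n)).Adj p.2 q.2) ↔ p.1 ≠ q.1
  simp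

private lemma weight19 (p : Fin m × Fin n) :
    ldWeight (lexProd (⊤ : SimpleGraph (Fin m)) (⊥ : SimpleGraph (Fin n))) (lab19 m n) p
      + psum19 m n p.1 = ∑ k : Fin m, psum19 m n k := by
  classical
  unfold ldWeight
  simp only [adj19]
  rw [Fintype.sum_prod_type]
  have h1 : ∀ k : Fin m, (∑ l : Fin n, if p.1 ≠ k then lab19 m n (k, l) else 0)
      = if p.1 ≠ k then psum19 m n k else 0 := by
    intro k; split_ifs <;> simp [psum19]
  rw [Finset.sum_congr rfl fun k _ => h1 k]
  have h2 : psum19 m n p.1 = ∑ k : Fin m, if p.1 = k then psum19 m n k else 0 := by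
    simp
  rw [h2, ← Finset.sum_add_distrib]
  refine Finset.sum_congr rfl fun k _ => ?_
  split_ifs <;> simp_all

private lemma psum19_inj (hn : 0 < n) : Function.Injective (psum19 m n) := by
  intro a b h
  have ha : psum19 m n a = n * (a * n) + ∑ l : Fin n, ((l : ℕ) + 1) := by
    simp [psum19, lab19, Finset.sum_add_distrib, mul_comm, add_assoc]
  have hb : psum19 m n b = n * (b * n) + ∑ l : Fin n, ((l : ℕ) + 1) := by
    simp [psum19, lab19, Finset.sum_add_distrib, mul_comm, add_assoc]
  rw [ha, hb] at h
  have h1 : (a : ℕ) * n = b * n :=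
    Nat.eq_of_mul_eq_mul_left hn (Nat.add_right_cancel h)
  exact Fin.ext (Nat.eq_of_mul_eq_mul_right hn h1)

private lemma lab19_bijOn (hn : 0 < n) :
    Set.BijOn (lab19 m n) Set.univ (Set.Icc 1 (Fintype.card (Fin m × Fin n))) := by
  have hcard : Fintype.card (Fin m × Fin n) = m * n := by simp
  rw [hcard]
  refine ⟨fun p _ => ?_, fun p _ q _ h => ?_, fun k hk => ?_⟩
  · constructor
    · simp [lab19]
    · have h1 : (p.1 : ℕ) + 1 ≤ m := p.1.2
      have h2 : (p.2 : ℕ) + 1 ≤ n := p.2.2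
      calc lab19 m n p = p.1 * n + (p.2 + 1) := by simp [lab19, add_assoc]
        _ ≤ p.1 * n + n := by omega
        _ = ((p.1 : ℕ) + 1) * n := by ring
        _ ≤ m * n := Nat.mul_le_mul_right n h1
  · simp only [lab19] at h
    have h' : (p.1 : ℕ) * n + p.2 = q.1 * n + q.2 := by omega
    have hp2 := p.2.2
    have hq2 := q.2.2
    have e1 : (p.1 : ℕ) = q.1 := by
      rcases Nat.lt_trichotomy (p.1 : ℕ) (q.1 : ℕ) with hlt | he | hlt
      · nlinarith
      · exact he
      · nlinarith
    have e2 : (p.2 : ℕ) = q.2 := by nlinarith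
    exact Prod.ext (Fin.ext e1) (Fin.ext e2)
  · obtain ⟨hk1, hk2⟩ := hk
    set t := k - 1 with ht
    have htlt : t < m * n := by omega
    have hi : t / n < m := by
      rw [Nat.div_lt_iff_lt_mul hn]; omega
    refine ⟨(⟨t / n, hi⟩, ⟨t % n, Nat.mod_lt _ hn⟩), Set.mem_univ _, ?_⟩
    simp only [lab19]
    have := Nat.div_add_mod' t n
    omega

end proof19

theorem stmt_19 (m n : ℕ) (hm : 0 < m) (hn : 1 < n) :
    chiLD (lexProd (⊤ : SimpleGraph (Fin m)) (⊥ : SimpleGraph (Fin n))) = m := by 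
  have hn0 : 0 < n := by omega
  set G := lexProd (⊤ : SimpleGraph (Fin m)) (⊥ : SimpleGraph (Fin n)) with hGdef
  have hwinj : ∀ p q : Fin m × Fin n,
      ldWeight G (lab19 m n) p = ldWeight G (lab19 m n) q → p.1 = q.1 := by
    intro p q h
    have h1 := weight19 m n p
    have h2 := weight19 m n q
    rw [← hGdef] at h1 h2
    have h3 : psum19 m n p.1 = psum19 m n q.1 := by omega
    exact psum19_inj m n hn0 h3
  have hwfst : ∀ p : Fin m × Fin n,
      ldWeight G (lab19 m n) p = ldWeight G (lab19 m n) (p.1, (⟨0, hn0⟩ : Fin n)) := by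
    intro p
    have h1 := weight19 m n p
    have h2 := weight19 m n (p.1, (⟨0, hn0⟩ : Fin n))
    rw [← hGdef] at h1 h2
    dsimp only at h2
    omega
  have hmem : m ∈ {k | ∃ f : Fin m × Fin n → ℕ, IsLDAL G f ∧
      (Finset.univ.image (ldWeight G f)).card = k} := by
    refine ⟨lab19 m n, ⟨lab19_bijOn m n hn0, fun u v huv h => ?_⟩, ?_⟩
    · exact ((adj19 m n u v).mp huv) (hwinj u v h)
    · have himg : Finset.univ.image (ldWeight G (lab19 m n)) =
          Finset.univ.image (fun i : Fin m =>
            ldWeight G (lab19 m n) (i, (⟨0, hn0⟩ : Fin n))) := by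
        apply Finset.Subset.antisymm
        · intro a ha
          simp only [Finset.mem_image, Finset.mem_univ, true_and] at ha ⊢
          obtain ⟨p, hp⟩ := ha
          exact ⟨p.1, by rw [← hwfst p]; exact hp⟩
        · intro a ha
          simp only [Finset.mem_image, Finset.mem_univ, true_and] at ha ⊢
          obtain ⟨i, hi⟩ := ha
          exact ⟨(i, (⟨0, hn0⟩ : Fin n)), hi⟩
      rw [himg, Finset.card_image_of_injective _ (fun a b h => ?_), Finset.card_univ,
        Fintype.card_fin]
      exact hwinj _ _ h
  refine le_antisymm (Nat.sInf_le hmem) (le_csInf ⟨m, hmem⟩ ?_)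
  rintro k ⟨f, ⟨hbij, hadj⟩, rfl⟩
  have hginj : Function.Injective
      (fun i : Fin m => ldWeight G f (i, (⟨0, hn0⟩ : Fin n))) := by
    intro a b h
    by_contra hne
    exact hadj ((adj19 m n (a, (⟨0, hn0⟩ : Fin n)) (b, (⟨0, hn0⟩ : Fin n))).mpr
      (fun e => hne (Fin.ext (congrArg Fin.val e)))) h
  have hsub : Finset.univ.image (fun i : Fin m => ldWeight G f (i, (⟨0, hn0⟩ : Fin n)))
      ⊆ Finset.univ.image (ldWeight G f) := by
    intro a ha
    simp only [Finset.mem_image, Finset.mem_univ, true_and] at ha ⊢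
    obtain ⟨i, hi⟩ := ha
    exact ⟨(i, (⟨0, hn0⟩ : Fin n)), hi⟩
  calc m = (Finset.univ.image
        (fun i : Fin m => ldWeight G f (i, (⟨0, hn0⟩ : Fin n)))).card := by
        rw [Finset.card_image_of_injective _ hginj, Finset.card_univ, Fintype.card_fin]
    _ ≤ (Finset.univ.image (ldWeight G f)).card := Finset.card_le_card hsub
end
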